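/- Let Q be a medial quandle in which all orbits have the same finite cardinality and at least one orbit, as a subquandle, is latin. Then every orbit of Q, as a subquandle, is latin. -/

import Mathlib

/-- The set of left translations of a binary algebra `(Q, op)`, viewed as permutations:
permutations `f` such that `f x = op a x` for some `a`. -/
def translations {Q : Type*} (op : Q → Q → Q) : Set (Equiv.Perm Q) :=
  { f | ∃ a : Q, ∀ x : Q, f x = op a x }

/-- The (left) multiplication group `LMlt(Q)`: the subgroup of the symmetric group
generated by the left translations. -/
def LMlt {Q : Type*} (op : Q → Q → Q) : Subgroup (Equiv.Perm Q) :=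
  Subgroup.closure (translations op)

/-- The displacement group `Dis(Q)`: the subgroup generated by all `L_a * L_b⁻¹`. -/
def Dis {Q : Type*} (op : Q → Q → Q) : Subgroup (Equiv.Perm Q) :=
  Subgroup.closure { f | ∃ g ∈ translations op, ∃ h ∈ translations op, f = g * h⁻¹ }

/-- `(Q, op)` is a quandle: idempotent, left distributive, left quasigroup. -/
def IsQuandle {Q : Type*} (op : Q → Q → Q) : Prop :=
  (∀ x, op x x = x) ∧
  (∀ x y z, op x (op y z) = op (op x y) (op x z)) ∧
  (∀ x y, ∃! u, op x u = y)

/-- `(Q, op)` is medial. -/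
def IsMedial {Q : Type*} (op : Q → Q → Q) : Prop :=
  ∀ x y u v, op (op x y) (op u v) = op (op x u) (op y v)

/-- The orbit of `e` under the multiplication group. -/
def qOrbit {Q : Type*} (op : Q → Q → Q) (e : Q) : Set Q :=
  { y | ∃ f ∈ LMlt op, f e = y }

/-- The orbit of `e` under the displacement group. -/
def disOrbit {Q : Type*} (op : Q → Q → Q) (e : Q) : Set Q :=
  { y | ∃ f ∈ Dis op, f e = y }

theorem Equiv.Perm.apply_inv_self {α : Type*} (f : Equiv.Perm α) (x : α) : f (f⁻¹ x) = x :=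
  Equiv.apply_symm_apply f x

theorem Equiv.Perm.inv_apply_self {α : Type*} (f : Equiv.Perm α) (x : α) : f⁻¹ (f x) = x :=
  Equiv.symm_apply_apply f x

namespace QProofAux

variable {Q : Type*} {op : Q → Q → Q}

/-- The left translation by `a`, as a permutation. -/
noncomputable def Lp (hQ : IsQuandle op) (a : Q) : Equiv.Perm Q :=
  Equiv.ofBijective (op a)
    ⟨fun x y hxy => by
      obtain ⟨u, _, huniq⟩ := hQ.2.2 a (op a y)
      exact (huniq x hxy).trans (huniq y rfl).symm,
     fun y => (hQ.2.2 a y).exists⟩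

theorem lp_apply (hQ : IsQuandle op) (a x : Q) : Lp hQ a x = op a x := rfl

theorem lp_self (hQ : IsQuandle op) (y : Q) : Lp hQ y y = y := hQ.1 y

theorem lp_inv_self (hQ : IsQuandle op) (y : Q) : (Lp hQ y)⁻¹ y = y := by
  have h : Lp hQ y y = y := hQ.1 y
  calc (Lp hQ y)⁻¹ y = (Lp hQ y)⁻¹ (Lp hQ y y) := by rw [h]
    _ = y := Equiv.Perm.inv_apply_self _ _

theorem lp_mem_translations (hQ : IsQuandle op) (a : Q) : Lp hQ a ∈ translations op :=
  ⟨a, fun _ => rfl⟩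

theorem translations_eq (hQ : IsQuandle op) {f : Equiv.Perm Q} (hf : f ∈ translations op) :
    ∃ a, f = Lp hQ a := by
  obtain ⟨a, ha⟩ := hf
  exact ⟨a, Equiv.ext fun x => ha x⟩

theorem lp_mem_lmlt (hQ : IsQuandle op) (a : Q) : Lp hQ a ∈ LMlt op :=
  Subgroup.subset_closure (lp_mem_translations hQ a)

theorem dis_le_lmlt : Dis op ≤ LMlt op := by
  apply (Subgroup.closure_le _).mpr
  rintro f ⟨g, hg, h, hh, rfl⟩
  exact mul_mem (Subgroup.subset_closure hg) (inv_mem (Subgroup.subset_closure hh))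

/-- Every element of the multiplication group is a quandle automorphism. -/
theorem lmlt_aut (hQ : IsQuandle op) {f : Equiv.Perm Q} (hf : f ∈ LMlt op) :
    ∀ x y, f (op x y) = op (f x) (f y) := by
  have hf' : f ∈ Subgroup.closure (translations op) := hf
  clear hf
  induction hf' using Subgroup.closure_induction with
  | mem g hg =>
      intro x y
      obtain ⟨a, rfl⟩ := translations_eq hQ hg
      exact hQ.2.1 a x y
  | one => intro x y; rfl
  | mul g h _ _ ihg ihh =>
      intro x y
      simp only [Equiv.Perm.mul_apply]
      rw [ihh, ihg]
  | inv g _ ih =>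
      intro x y
      have h1 := ih (g⁻¹ x) (g⁻¹ y)
      rw [Equiv.Perm.apply_inv_self, Equiv.Perm.apply_inv_self] at h1
      rw [← h1, Equiv.Perm.inv_apply_self]

theorem lmlt_conj (hQ : IsQuandle op) {f : Equiv.Perm Q} (hf : f ∈ LMlt op) (a : Q) :
    f * Lp hQ a * f⁻¹ = Lp hQ (f a) := by
  apply Equiv.ext
  intro x
  rw [Equiv.Perm.mul_apply, Equiv.Perm.mul_apply]
  show f (op a (f⁻¹ x)) = op (f a) x
  rw [lmlt_aut hQ hf, Equiv.Perm.apply_inv_self]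

/-- Mediality in terms of translations: `L_{x·y} L_u = L_{x·u} L_y`. -/
theorem med_star (hQ : IsQuandle op) (hM : IsMedial op) (x y u : Q) :
    Lp hQ (op x y) * Lp hQ u = Lp hQ (op x u) * Lp hQ y := by
  apply Equiv.ext
  intro v
  simp only [Equiv.Perm.mul_apply, lp_apply]
  exact hM x y u v

/-- The generators of the displacement group. -/
def dgens (hQ : IsQuandle op) : Set (Equiv.Perm Q) :=
  { f | ∃ a b, f = Lp hQ a * (Lp hQ b)⁻¹ }

theorem dis_eq_closure (hQ : IsQuandle op) : Dis op = Subgroup.closure (dgens hQ) := by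
  unfold Dis
  congr 1
  ext f
  constructor
  · rintro ⟨g, hg, h, hh, rfl⟩
    obtain ⟨a, rfl⟩ := translations_eq hQ hg
    obtain ⟨b, rfl⟩ := translations_eq hQ hh
    exact ⟨a, b, rfl⟩
  · rintro ⟨a, b, rfl⟩
    exact ⟨_, lp_mem_translations hQ a, _, lp_mem_translations hQ b, rfl⟩

theorem gen_mem_dis (hQ : IsQuandle op) (a b : Q) :
    Lp hQ a * (Lp hQ b)⁻¹ ∈ Dis op := by
  rw [dis_eq_closure hQ]
  exact Subgroup.subset_closure ⟨a, b, rfl⟩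

/-- Conjugation of a displacement generator by any translation is independent of the
translation. -/
theorem genconj (hQ : IsQuandle op) (hM : IsMedial op) (c z a b : Q) :
    Lp hQ c * (Lp hQ a * (Lp hQ b)⁻¹) * (Lp hQ c)⁻¹
      = Lp hQ z * (Lp hQ a * (Lp hQ b)⁻¹) * (Lp hQ z)⁻¹ := by
  have hcu : op c ((Lp hQ c)⁻¹ z) = z := Equiv.Perm.apply_inv_self (Lp hQ c) z
  have hsa := med_star hQ hM c a ((Lp hQ c)⁻¹ z)
  have hsb := med_star hQ hM c b ((Lp hQ c)⁻¹ z)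
  rw [hcu] at hsa hsb
  have ha' : Lp hQ (op c a) = Lp hQ z * Lp hQ a * (Lp hQ ((Lp hQ c)⁻¹ z))⁻¹ := by
    rw [← hsa]; group
  have hb' : Lp hQ (op c b) = Lp hQ z * Lp hQ b * (Lp hQ ((Lp hQ c)⁻¹ z))⁻¹ := by
    rw [← hsb]; group
  have h1 : Lp hQ c * Lp hQ a * (Lp hQ c)⁻¹ = Lp hQ (op c a) :=
    lmlt_conj hQ (lp_mem_lmlt hQ c) a
  have h2 : Lp hQ c * Lp hQ b * (Lp hQ c)⁻¹ = Lp hQ (op c b) :=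
    lmlt_conj hQ (lp_mem_lmlt hQ c) b
  calc Lp hQ c * (Lp hQ a * (Lp hQ b)⁻¹) * (Lp hQ c)⁻¹
      = (Lp hQ c * Lp hQ a * (Lp hQ c)⁻¹) * (Lp hQ c * Lp hQ b * (Lp hQ c)⁻¹)⁻¹ := by group
    _ = Lp hQ (op c a) * (Lp hQ (op c b))⁻¹ := by rw [h1, h2]
    _ = (Lp hQ z * Lp hQ a * (Lp hQ ((Lp hQ c)⁻¹ z))⁻¹)
          * (Lp hQ z * Lp hQ b * (Lp hQ ((Lp hQ c)⁻¹ z))⁻¹)⁻¹ := by rw [ha', hb']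
    _ = Lp hQ z * (Lp hQ a * (Lp hQ b)⁻¹) * (Lp hQ z)⁻¹ := by group

/-- Conjugation by a translation is independent of the translation, on all of `Dis`. -/
theorem dis_conj_eq (hQ : IsQuandle op) (hM : IsMedial op) {d : Equiv.Perm Q}
    (hd : d ∈ Dis op) (z w : Q) :
    Lp hQ z * d * (Lp hQ z)⁻¹ = Lp hQ w * d * (Lp hQ w)⁻¹ := by
  rw [dis_eq_closure hQ] at hd
  induction hd using Subgroup.closure_induction with
  | mem g hg =>
      obtain ⟨a, b, rfl⟩ := hg
      exact genconj hQ hM z w a b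
  | one => group
  | mul g h _ _ ihg ihh =>
      calc Lp hQ z * (g * h) * (Lp hQ z)⁻¹
          = (Lp hQ z * g * (Lp hQ z)⁻¹) * (Lp hQ z * h * (Lp hQ z)⁻¹) := by group
        _ = (Lp hQ w * g * (Lp hQ w)⁻¹) * (Lp hQ w * h * (Lp hQ w)⁻¹) := by rw [ihg, ihh]
        _ = Lp hQ w * (g * h) * (Lp hQ w)⁻¹ := by group
  | inv g _ ihg =>
      calc Lp hQ z * g⁻¹ * (Lp hQ z)⁻¹
          = (Lp hQ z * g * (Lp hQ z)⁻¹)⁻¹ := by group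
        _ = (Lp hQ w * g * (Lp hQ w)⁻¹)⁻¹ := by rw [ihg]
        _ = Lp hQ w * g⁻¹ * (Lp hQ w)⁻¹ := by group

theorem dis_conj_mem (hQ : IsQuandle op) {d : Equiv.Perm Q}
    (hd : d ∈ Dis op) (z : Q) :
    Lp hQ z * d * (Lp hQ z)⁻¹ ∈ Dis op := by
  rw [dis_eq_closure hQ] at hd
  induction hd using Subgroup.closure_induction with
  | mem g hg =>
      obtain ⟨a, b, rfl⟩ := hg
      have h : Lp hQ z * (Lp hQ a * (Lp hQ b)⁻¹) * (Lp hQ z)⁻¹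
          = Lp hQ (op z a) * (Lp hQ (op z b))⁻¹ := by
        have h1 : Lp hQ z * Lp hQ a * (Lp hQ z)⁻¹ = Lp hQ (op z a) :=
          lmlt_conj hQ (lp_mem_lmlt hQ z) a
        have h2 : Lp hQ z * Lp hQ b * (Lp hQ z)⁻¹ = Lp hQ (op z b) :=
          lmlt_conj hQ (lp_mem_lmlt hQ z) b
        calc Lp hQ z * (Lp hQ a * (Lp hQ b)⁻¹) * (Lp hQ z)⁻¹
            = (Lp hQ z * Lp hQ a * (Lp hQ z)⁻¹) * (Lp hQ z * Lp hQ b * (Lp hQ z)⁻¹)⁻¹ := by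
              group
          _ = Lp hQ (op z a) * (Lp hQ (op z b))⁻¹ := by rw [h1, h2]
      rw [h]
      exact gen_mem_dis hQ _ _
  | one =>
      have h : Lp hQ z * (1 : Equiv.Perm Q) * (Lp hQ z)⁻¹ = 1 := by group
      rw [h]; exact one_mem _
  | mul g h _ _ ihg ihh =>
      have he : Lp hQ z * (g * h) * (Lp hQ z)⁻¹
          = (Lp hQ z * g * (Lp hQ z)⁻¹) * (Lp hQ z * h * (Lp hQ z)⁻¹) := by group
      rw [he]; exact mul_mem ihg ihh
  | inv g _ ihg =>
      have he : Lp hQ z * g⁻¹ * (Lp hQ z)⁻¹ = (Lp hQ z * g * (Lp hQ z)⁻¹)⁻¹ := by group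
      rw [he]; exact inv_mem ihg

theorem gen_comm (hQ : IsQuandle op) (hM : IsMedial op) (a b c d : Q) :
    (Lp hQ a * (Lp hQ b)⁻¹) * (Lp hQ c * (Lp hQ d)⁻¹)
      = (Lp hQ c * (Lp hQ d)⁻¹) * (Lp hQ a * (Lp hQ b)⁻¹) := by
  have hc : op b ((Lp hQ b)⁻¹ c) = c := Equiv.Perm.apply_inv_self (Lp hQ b) c
  have hd : op b ((Lp hQ b)⁻¹ d) = d := Equiv.Perm.apply_inv_self (Lp hQ b) d
  have e1 : Lp hQ b * Lp hQ ((Lp hQ b)⁻¹ c) * (Lp hQ b)⁻¹ = Lp hQ c := by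
    rw [lmlt_conj hQ (lp_mem_lmlt hQ b)]
    exact congrArg (Lp hQ) hc
  have e2 : Lp hQ b * Lp hQ ((Lp hQ b)⁻¹ d) * (Lp hQ b)⁻¹ = Lp hQ d := by
    rw [lmlt_conj hQ (lp_mem_lmlt hQ b)]
    exact congrArg (Lp hQ) hd
  have h1 : Lp hQ c * (Lp hQ d)⁻¹
      = Lp hQ b * (Lp hQ ((Lp hQ b)⁻¹ c) * (Lp hQ ((Lp hQ b)⁻¹ d))⁻¹) * (Lp hQ b)⁻¹ := by
    calc Lp hQ c * (Lp hQ d)⁻¹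
        = (Lp hQ b * Lp hQ ((Lp hQ b)⁻¹ c) * (Lp hQ b)⁻¹)
            * (Lp hQ b * Lp hQ ((Lp hQ b)⁻¹ d) * (Lp hQ b)⁻¹)⁻¹ := by rw [e1, e2]
      _ = Lp hQ b * (Lp hQ ((Lp hQ b)⁻¹ c) * (Lp hQ ((Lp hQ b)⁻¹ d))⁻¹) * (Lp hQ b)⁻¹ := by
          group
  have h2 := genconj hQ hM a b ((Lp hQ b)⁻¹ c) ((Lp hQ b)⁻¹ d)
  rw [h1]
  calc Lp hQ a * (Lp hQ b)⁻¹
        * (Lp hQ b * (Lp hQ ((Lp hQ b)⁻¹ c) * (Lp hQ ((Lp hQ b)⁻¹ d))⁻¹) * (Lp hQ b)⁻¹)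
      = (Lp hQ a * (Lp hQ ((Lp hQ b)⁻¹ c) * (Lp hQ ((Lp hQ b)⁻¹ d))⁻¹) * (Lp hQ a)⁻¹)
          * (Lp hQ a * (Lp hQ b)⁻¹) := by group
    _ = (Lp hQ b * (Lp hQ ((Lp hQ b)⁻¹ c) * (Lp hQ ((Lp hQ b)⁻¹ d))⁻¹) * (Lp hQ b)⁻¹)
          * (Lp hQ a * (Lp hQ b)⁻¹) := by rw [h2]

/-- The displacement group of a medial quandle is abelian. -/
theorem dis_comm (hQ : IsQuandle op) (hM : IsMedial op) :
    ∀ d ∈ Dis op, ∀ e ∈ Dis op, d * e = e * d := by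
  rw [dis_eq_closure hQ]
  intro d hd
  induction hd using Subgroup.closure_induction with
  | mem s hs =>
      intro e he
      induction he using Subgroup.closure_induction with
      | mem t ht =>
          obtain ⟨a, b, rfl⟩ := hs
          obtain ⟨c, d', rfl⟩ := ht
          exact gen_comm hQ hM a b c d'
      | one => exact Commute.one_right _
      | mul t u _ _ iht ihu => exact Commute.mul_right iht ihu
      | inv t _ iht => exact Commute.inv_right iht
  | one => intro e _; exact Commute.one_left _
  | mul x y _ _ ihx ihy => intro e he; exact Commute.mul_left (ihx e he) (ihy e he)
  | inv x _ ihx => intro e he; exact Commute.inv_left (ihx e he)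

/-- `θ_z(d) = d ⬝ (L_z d L_z⁻¹)⁻¹`. -/
noncomputable def th (hQ : IsQuandle op) (z : Q) (d : Equiv.Perm Q) : Equiv.Perm Q :=
  d * (Lp hQ z * d * (Lp hQ z)⁻¹)⁻¹

theorem th_indep (hQ : IsQuandle op) (hM : IsMedial op) {d : Equiv.Perm Q}
    (hd : d ∈ Dis op) (z w : Q) : th hQ z d = th hQ w d := by
  unfold th
  rw [dis_conj_eq hQ hM hd z w]

theorem th_mem (hQ : IsQuandle op) {d : Equiv.Perm Q}
    (hd : d ∈ Dis op) (z : Q) : th hQ z d ∈ Dis op :=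
  mul_mem hd (inv_mem (dis_conj_mem hQ hd z))

theorem th_one (hQ : IsQuandle op) (z : Q) : th hQ z (1 : Equiv.Perm Q) = 1 := by
  unfold th; group

theorem th_mul (hQ : IsQuandle op) (hM : IsMedial op) {d e : Equiv.Perm Q}
    (hd : d ∈ Dis op) (he : e ∈ Dis op) (z : Q) :
    th hQ z (d * e) = th hQ z d * th hQ z e := by
  have hD : Lp hQ z * d * (Lp hQ z)⁻¹ ∈ Dis op := dis_conj_mem hQ hd z
  have hE : Lp hQ z * e * (Lp hQ z)⁻¹ ∈ Dis op := dis_conj_mem hQ he z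
  have h1 : (Lp hQ z * d * (Lp hQ z)⁻¹)⁻¹ * e = e * (Lp hQ z * d * (Lp hQ z)⁻¹)⁻¹ :=
    dis_comm hQ hM _ (inv_mem hD) _ he
  have h2 : (Lp hQ z * e * (Lp hQ z)⁻¹)⁻¹ * (Lp hQ z * d * (Lp hQ z)⁻¹)⁻¹
      = (Lp hQ z * d * (Lp hQ z)⁻¹)⁻¹ * (Lp hQ z * e * (Lp hQ z)⁻¹)⁻¹ :=
    dis_comm hQ hM _ (inv_mem hE) _ (inv_mem hD)
  show d * e * (Lp hQ z * (d * e) * (Lp hQ z)⁻¹)⁻¹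
      = (d * (Lp hQ z * d * (Lp hQ z)⁻¹)⁻¹) * (e * (Lp hQ z * e * (Lp hQ z)⁻¹)⁻¹)
  calc d * e * (Lp hQ z * (d * e) * (Lp hQ z)⁻¹)⁻¹
      = d * e * ((Lp hQ z * e * (Lp hQ z)⁻¹)⁻¹ * (Lp hQ z * d * (Lp hQ z)⁻¹)⁻¹) := by group
    _ = d * e * ((Lp hQ z * d * (Lp hQ z)⁻¹)⁻¹ * (Lp hQ z * e * (Lp hQ z)⁻¹)⁻¹) := by rw [h2]
    _ = d * (e * (Lp hQ z * d * (Lp hQ z)⁻¹)⁻¹) * (Lp hQ z * e * (Lp hQ z)⁻¹)⁻¹ := by group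
    _ = d * ((Lp hQ z * d * (Lp hQ z)⁻¹)⁻¹ * e) * (Lp hQ z * e * (Lp hQ z)⁻¹)⁻¹ := by rw [h1]
    _ = (d * (Lp hQ z * d * (Lp hQ z)⁻¹)⁻¹) * (e * (Lp hQ z * e * (Lp hQ z)⁻¹)⁻¹) := by group

theorem th_inv (hQ : IsQuandle op) (hM : IsMedial op) {d : Equiv.Perm Q}
    (hd : d ∈ Dis op) (z : Q) : th hQ z d⁻¹ = (th hQ z d)⁻¹ := by
  have h := th_mul hQ hM hd (inv_mem hd) z
  rw [mul_inv_cancel, th_one] at h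
  exact (inv_eq_of_mul_eq_one_right h.symm).symm

theorem th_fix (hQ : IsQuandle op) {d : Equiv.Perm Q} (hd : d ∈ Dis op) {x : Q}
    (hx : d x = x) : th hQ x d = 1 := by
  have h1 : d * Lp hQ x * d⁻¹ = Lp hQ (d x) := lmlt_conj hQ (dis_le_lmlt hd) x
  rw [hx] at h1
  have h3 : d * Lp hQ x = Lp hQ x * d := by
    calc d * Lp hQ x = (d * Lp hQ x * d⁻¹) * d := by group
      _ = Lp hQ x * d := by rw [h1]
  have h4 : Lp hQ x * d * (Lp hQ x)⁻¹ = d := by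
    rw [← h3]; group
  unfold th
  rw [h4]; group

theorem th_wd (hQ : IsQuandle op) (hM : IsMedial op) {d d' : Equiv.Perm Q}
    (hd : d ∈ Dis op) (hd' : d' ∈ Dis op) {x : Q} (h : d x = d' x) (z : Q) :
    th hQ z d = th hQ z d' := by
  have hu : d'⁻¹ * d ∈ Dis op := mul_mem (inv_mem hd') hd
  have hux : (d'⁻¹ * d) x = x := by
    rw [Equiv.Perm.mul_apply, h, Equiv.Perm.inv_apply_self]
  have h1 : th hQ z (d'⁻¹ * d) = 1 := by
    rw [th_indep hQ hM hu z x]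
    exact th_fix hQ hu hux
  rw [th_mul hQ hM (inv_mem hd') hd, th_inv hQ hM hd'] at h1
  exact (inv_mul_eq_one.mp h1).symm

theorem self_mem_qOrbit (e : Q) : e ∈ qOrbit op e := ⟨1, one_mem _, rfl⟩

theorem qOrbit_mapsTo {f : Equiv.Perm Q} (hf : f ∈ LMlt op) {e y : Q}
    (hy : y ∈ qOrbit op e) : f y ∈ qOrbit op e := by
  obtain ⟨g, hg, rfl⟩ := hy
  exact ⟨f * g, mul_mem hf hg, rfl⟩

theorem lmlt_dis_pointwise (hQ : IsQuandle op) {f : Equiv.Perm Q} (hf : f ∈ LMlt op) :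
    ∀ y, ∃ d ∈ Dis op, f y = d y := by
  have hf' : f ∈ Subgroup.closure (translations op) := hf
  clear hf
  induction hf' using Subgroup.closure_induction with
  | mem g hg =>
      intro y
      obtain ⟨a, rfl⟩ := translations_eq hQ hg
      refine ⟨Lp hQ a * (Lp hQ y)⁻¹, gen_mem_dis hQ a y, ?_⟩
      rw [Equiv.Perm.mul_apply, lp_inv_self]
  | one => intro y; exact ⟨1, one_mem _, rfl⟩
  | mul g h _ _ ihg ihh =>
      intro y
      obtain ⟨d1, hd1, e1⟩ := ihh y
      obtain ⟨d2, hd2, e2⟩ := ihg (d1 y)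
      refine ⟨d2 * d1, mul_mem hd2 hd1, ?_⟩
      rw [Equiv.Perm.mul_apply, Equiv.Perm.mul_apply, e1, e2]
  | inv g _ ihg =>
      intro y
      obtain ⟨d, hd, e⟩ := ihg (g⁻¹ y)
      rw [Equiv.Perm.apply_inv_self] at e
      refine ⟨d⁻¹, inv_mem hd, ?_⟩
      have h2 : d⁻¹ (d (g⁻¹ y)) = d⁻¹ y := by rw [← e]
      rw [Equiv.Perm.inv_apply_self] at h2
      exact h2

theorem mem_qOrbit_iff_dis (hQ : IsQuandle op) {e x : Q} :
    x ∈ qOrbit op e ↔ ∃ d ∈ Dis op, d e = x := by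
  constructor
  · rintro ⟨f, hf, rfl⟩
    obtain ⟨d, hd, hd2⟩ := lmlt_dis_pointwise hQ hf e
    exact ⟨d, hd, hd2.symm⟩
  · rintro ⟨d, hd, rfl⟩
    exact ⟨d, dis_le_lmlt hd, rfl⟩

theorem lp_diff (hQ : IsQuandle op) (hM : IsMedial op) {d d' : Equiv.Perm Q}
    (hd : d ∈ Dis op) (hd' : d' ∈ Dis op) (e : Q) :
    (d * Lp hQ e * d⁻¹) * (d' * Lp hQ e * d'⁻¹)⁻¹ = th hQ e (d * d'⁻¹) := by
  have hc : Lp hQ e * (d⁻¹ * d') * (Lp hQ e)⁻¹ ∈ Dis op :=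
    dis_conj_mem hQ (mul_mem (inv_mem hd) hd') e
  have hdd' : d * d'⁻¹ ∈ Dis op := mul_mem hd (inv_mem hd')
  have comm1 : (Lp hQ e * (d⁻¹ * d') * (Lp hQ e)⁻¹) * d
      = d * (Lp hQ e * (d⁻¹ * d') * (Lp hQ e)⁻¹) := dis_comm hQ hM _ hc _ hd
  have comm3 : (Lp hQ e * (d⁻¹ * d') * (Lp hQ e)⁻¹) * (d * d'⁻¹)
      = (d * d'⁻¹) * (Lp hQ e * (d⁻¹ * d') * (Lp hQ e)⁻¹) := dis_comm hQ hM _ hc _ hdd'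
  have hswap : d' * d⁻¹ = d⁻¹ * d' := by
    have := dis_comm hQ hM _ hd' _ (inv_mem hd)
    exact this
  calc (d * Lp hQ e * d⁻¹) * (d' * Lp hQ e * d'⁻¹)⁻¹
      = d * (Lp hQ e * (d⁻¹ * d') * (Lp hQ e)⁻¹) * d'⁻¹ := by group
    _ = (Lp hQ e * (d⁻¹ * d') * (Lp hQ e)⁻¹) * d * d'⁻¹ := by rw [← comm1]
    _ = (Lp hQ e * (d⁻¹ * d') * (Lp hQ e)⁻¹) * (d * d'⁻¹) := by rw [mul_assoc]
    _ = (d * d'⁻¹) * (Lp hQ e * (d⁻¹ * d') * (Lp hQ e)⁻¹) := comm3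
    _ = (d * d'⁻¹) * (Lp hQ e * (d' * d⁻¹) * (Lp hQ e)⁻¹) := by rw [hswap]
    _ = th hQ e (d * d'⁻¹) := by unfold th; group

open Classical in
/-- The comparison map between two orbits. -/
noncomputable def psiF (hQ : IsQuandle op) (e₀ e : Q) : Q → Q :=
  fun x => if h : ∃ c, c ∈ Dis op ∧ c e₀ = x then th hQ e₀ h.choose e else x

theorem psiF_apply (hQ : IsQuandle op) (hM : IsMedial op) (e₀ e : Q) {d : Equiv.Perm Q}
    (hd : d ∈ Dis op) : psiF hQ e₀ e (d e₀) = th hQ e₀ d e := by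
  have hex : ∃ c, c ∈ Dis op ∧ c e₀ = d e₀ := ⟨d, hd, rfl⟩
  simp only [psiF]
  rw [dif_pos hex]
  rw [th_wd hQ hM hex.choose_spec.1 hd hex.choose_spec.2 e₀]

end QProofAux

open QProofAux in
/-- Proposition 5.1: in a medial quandle in which all orbits have the same finite size
and some orbit is latin (as a subquandle), every orbit is latin. -/
theorem all_orbits_latin_of_one_latin {Q : Type*} (op : Q → Q → Q)
    (hQ : IsQuandle op) (hM : IsMedial op)
    (hfin : ∀ e : Q, (qOrbit op e).Finite)
    (hsame : ∀ e f : Q, (qOrbit op e).ncard = (qOrbit op f).ncard)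
    (hlatin : ∃ e : Q, ∀ a ∈ qOrbit op e,
      Set.BijOn (fun x => op x a) (qOrbit op e) (qOrbit op e)) :
    ∀ e : Q, ∀ a ∈ qOrbit op e,
      Set.BijOn (fun x => op x a) (qOrbit op e) (qOrbit op e) := by
  classical
  obtain ⟨e₀, hlat⟩ := hlatin
  -- Step A: the latin property at the orbit of `e₀`, in displacement-group terms.
  have P0 : ∀ d ∈ Dis op, th hQ e₀ d e₀ = e₀ → d e₀ = e₀ := by
    intro d hd hfix
    have hx : d e₀ ∈ qOrbit op e₀ := (mem_qOrbit_iff_dis hQ).mpr ⟨d, hd, rfl⟩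
    have h1 : d * Lp hQ e₀ * d⁻¹ = Lp hQ (d e₀) := lmlt_conj hQ (dis_le_lmlt hd) e₀
    have h2 := lp_diff hQ hM hd (one_mem _) e₀
    rw [h1] at h2
    simp only [one_mul, inv_one, mul_one] at h2
    -- h2 : Lp (d e₀) * (Lp e₀)⁻¹ = th hQ e₀ d
    have hLp : Lp hQ (d e₀) = th hQ e₀ d * Lp hQ e₀ := by
      rw [← h2]; group
    have h3 : Lp hQ (d e₀) e₀ = (th hQ e₀ d) (Lp hQ e₀ e₀) := by
      rw [hLp]; rfl
    rw [lp_self hQ e₀] at h3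
    rw [hfix] at h3
    -- h3 : Lp (d e₀) e₀ = e₀
    have hxe : op (d e₀) e₀ = op e₀ e₀ := by
      rw [hQ.1 e₀]; exact h3
    exact (hlat e₀ (self_mem_qOrbit e₀)).2.1 hx (self_mem_qOrbit e₀) hxe
  have P0' : ∀ c ∈ Dis op, ∀ c' ∈ Dis op,
      th hQ e₀ c e₀ = th hQ e₀ c' e₀ → c e₀ = c' e₀ := by
    intro c hc c' hc' h
    have hu : c'⁻¹ * c ∈ Dis op := mul_mem (inv_mem hc') hc
    have h1 : th hQ e₀ (c'⁻¹ * c) e₀ = e₀ := by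
      rw [th_mul hQ hM (inv_mem hc') hc, th_inv hQ hM hc']
      rw [Equiv.Perm.mul_apply, h, Equiv.Perm.inv_apply_self]
    have h2 := P0 _ hu h1
    rw [Equiv.Perm.mul_apply] at h2
    have h3 : c' (c'⁻¹ (c e₀)) = c' e₀ := congrArg (fun t => c' t) h2
    rwa [Equiv.Perm.apply_inv_self] at h3
  -- Step B: the property transfers to every orbit.
  have Pall : ∀ e : Q, ∀ u ∈ Dis op, th hQ e₀ u e = e → u e = e := by
    intro e
    have hinjOn : Set.InjOn (psiF hQ e₀ e) (qOrbit op e₀) := by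
      intro x hx x' hx' hxy
      obtain ⟨d, hd, rfl⟩ := (mem_qOrbit_iff_dis hQ).mp hx
      obtain ⟨d', hd', rfl⟩ := (mem_qOrbit_iff_dis hQ).mp hx'
      rw [psiF_apply hQ hM e₀ e hd, psiF_apply hQ hM e₀ e hd'] at hxy
      have h2 : th hQ e₀ (th hQ e₀ d) = th hQ e₀ (th hQ e₀ d') :=
        th_wd hQ hM (th_mem hQ hd e₀) (th_mem hQ hd' e₀) hxy e₀
      have h3 : th hQ e₀ d e₀ = th hQ e₀ d' e₀ :=
        P0' _ (th_mem hQ hd e₀) _ (th_mem hQ hd' e₀) (by rw [h2])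
      exact P0' _ hd _ hd' h3
    have hsub : psiF hQ e₀ e '' qOrbit op e₀ ⊆ qOrbit op e := by
      rintro y ⟨x, hx, rfl⟩
      obtain ⟨d, hd, rfl⟩ := (mem_qOrbit_iff_dis hQ).mp hx
      rw [psiF_apply hQ hM e₀ e hd]
      exact (mem_qOrbit_iff_dis hQ).mpr ⟨th hQ e₀ d, th_mem hQ hd e₀, rfl⟩
    have hcard : (psiF hQ e₀ e '' qOrbit op e₀).ncard = (qOrbit op e).ncard := by
      rw [Set.ncard_image_of_injOn hinjOn]
      exact hsame e₀ e
    have himg : psiF hQ e₀ e '' qOrbit op e₀ = qOrbit op e :=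
      Set.eq_of_subset_of_ncard_le hsub hcard.ge (hfin e)
    intro u hu hufix
    have hue : u e ∈ psiF hQ e₀ e '' qOrbit op e₀ := by
      rw [himg]
      exact (mem_qOrbit_iff_dis hQ).mpr ⟨u, hu, rfl⟩
    obtain ⟨x, hx, hpsix⟩ := hue
    obtain ⟨d, hd, rfl⟩ := (mem_qOrbit_iff_dis hQ).mp hx
    rw [psiF_apply hQ hM e₀ e hd] at hpsix
    -- hpsix : th hQ e₀ d e = u e
    have h4 : th hQ e₀ u = th hQ e₀ (th hQ e₀ d) :=
      th_wd hQ hM hu (th_mem hQ hd e₀) hpsix.symm e₀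
    have h5 : th hQ e₀ (th hQ e₀ d) e = e := by rw [← h4]; exact hufix
    have h6 : psiF hQ e₀ e (th hQ e₀ d e₀) = e := by
      rw [psiF_apply hQ hM e₀ e (th_mem hQ hd e₀)]; exact h5
    have h7 : psiF hQ e₀ e e₀ = e := by
      have h := psiF_apply hQ hM e₀ e (one_mem (Dis op))
      rw [th_one] at h
      simpa using h
    have h8 : th hQ e₀ d e₀ = e₀ :=
      hinjOn ((mem_qOrbit_iff_dis hQ).mpr ⟨th hQ e₀ d, th_mem hQ hd e₀, rfl⟩)
        (self_mem_qOrbit e₀) (h6.trans h7.symm)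
    have h9 : d e₀ = e₀ := P0 d hd h8
    have h9' : d e₀ = (1 : Equiv.Perm Q) e₀ := by simpa using h9
    have h10 : th hQ e₀ d = 1 := by
      have h := th_wd hQ hM hd (one_mem _) h9' e₀
      rwa [th_one] at h
    rw [← hpsix, h10]
    simp
  -- Step C: conclude that every orbit is latin.
  intro e a ha
  have hmaps : Set.MapsTo (fun x => op x a) (qOrbit op e) (qOrbit op e) := by
    intro x hx
    exact qOrbit_mapsTo (lp_mem_lmlt hQ x) ha
  have hinj : Set.InjOn (fun x => op x a) (qOrbit op e) := by
    intro x hx x' hx' hxa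
    obtain ⟨d, hd, rfl⟩ := (mem_qOrbit_iff_dis hQ).mp hx
    obtain ⟨d', hd', rfl⟩ := (mem_qOrbit_iff_dis hQ).mp hx'
    have hL1 : d * Lp hQ e * d⁻¹ = Lp hQ (d e) := lmlt_conj hQ (dis_le_lmlt hd) e
    have hL2 : d' * Lp hQ e * d'⁻¹ = Lp hQ (d' e) := lmlt_conj hQ (dis_le_lmlt hd') e
    have hdiff := lp_diff hQ hM hd hd' e
    rw [hL1, hL2] at hdiff
    -- hdiff : Lp (d e) * (Lp (d' e))⁻¹ = th hQ e (d * d'⁻¹)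
    have hy : th hQ e (d * d'⁻¹) (Lp hQ (d' e) a) = Lp hQ (d' e) a := by
      rw [← hdiff]
      rw [Equiv.Perm.mul_apply, Equiv.Perm.inv_apply_self]
      exact hxa
    have hymem : Lp hQ (d' e) a ∈ qOrbit op e := qOrbit_mapsTo (lp_mem_lmlt hQ _) ha
    obtain ⟨m, hm, hmy⟩ := (mem_qOrbit_iff_dis hQ).mp hymem
    have hdd' : d * d'⁻¹ ∈ Dis op := mul_mem hd (inv_mem hd')
    have hth : th hQ e (d * d'⁻¹) ∈ Dis op := th_mem hQ hdd' e
    have hcomm : th hQ e (d * d'⁻¹) * m = m * th hQ e (d * d'⁻¹) :=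
      dis_comm hQ hM _ hth _ hm
    have hfixe : th hQ e (d * d'⁻¹) e = e := by
      have hchain : m (th hQ e (d * d'⁻¹) e) = m e := by
        calc m (th hQ e (d * d'⁻¹) e)
            = (m * th hQ e (d * d'⁻¹)) e := (Equiv.Perm.mul_apply _ _ _).symm
          _ = (th hQ e (d * d'⁻¹) * m) e := by rw [hcomm]
          _ = th hQ e (d * d'⁻¹) (m e) := Equiv.Perm.mul_apply _ _ _
          _ = m e := by rw [hmy]; exact hy
      exact m.injective hchain
    have hfixe0 : th hQ e₀ (d * d'⁻¹) e = e := by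
      rw [th_indep hQ hM hdd' e₀ e]
      exact hfixe
    have hfix := Pall e _ hdd' hfixe0
    have hcdd : d * d'⁻¹ = d'⁻¹ * d := dis_comm hQ hM _ hd _ (inv_mem hd')
    rw [hcdd, Equiv.Perm.mul_apply] at hfix
    have hfin2 : d' (d'⁻¹ (d e)) = d' e := congrArg (fun t => d' t) hfix
    rwa [Equiv.Perm.apply_inv_self] at hfin2
  have himg2 : (fun x => op x a) '' qOrbit op e = qOrbit op e :=
    Set.eq_of_subset_of_ncard_le (Set.mapsTo_iff_image_subset.mp hmaps)
      (by rw [Set.ncard_image_of_injOn hinj]) (hfin e)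
  exact ⟨hmaps, hinj, himg2.symm.subset⟩
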